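/- arXiv:2405.06519 — 3 statements merged into one kernel-verified Lean document; each statement's English description precedes it below -/
import Mathlib

section
/- If Y is a Hausdorff space and B is a basis for the topology on Y consisting of compact open sets, then the smallest ring of sets containing B is exactly the collection of all compact open subsets of Y (equivalently, every compact open subset of Y is a finite union of basis elements). -/
/-- If `Y` is Hausdorff and `B` is a basis for the topology consisting of compact open sets,
then the smallest ring of sets containing `B` is exactly the collection of all compact open
subsets of `Y`. -/
theorem stmt_1 (Y : Type*) [TopologicalSpace Y] [T2Space Y] (B : Set (Set Y))
    (hB : ∀ A ∈ B, IsCompact A ∧ IsOpen A)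
    (hbasis : TopologicalSpace.IsTopologicalBasis B) :
    ⋂₀ {R : Set (Set Y) | MeasureTheory.IsSetRing R ∧ B ⊆ R} =
      {A : Set Y | IsCompact A ∧ IsOpen A} := by
  apply le_antisymm
  · intro A hA
    have hKO : MeasureTheory.IsSetRing {A : Set Y | IsCompact A ∧ IsOpen A} := by
      constructor
      · exact ⟨isCompact_empty, isOpen_empty⟩
      · rintro s t ⟨hsc, hso⟩ ⟨htc, hto⟩
        exact ⟨hsc.union htc, hso.union hto⟩
      · rintro s t ⟨hsc, hso⟩ ⟨htc, hto⟩
        refine ⟨?_, hso.sdiff htc.isClosed⟩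
        exact hsc.of_isClosed_subset (hsc.isClosed.sdiff hto) Set.diff_subset
    exact hA _ ⟨hKO, fun b hb => hB b hb⟩
  · rintro A ⟨hAc, hAo⟩ R ⟨hR, hBR⟩
    obtain ⟨S, hSB, rfl⟩ := hbasis.open_eq_sUnion hAo
    rw [Set.sUnion_eq_biUnion] at hAc ⊢
    obtain ⟨S', hS'S, hS'fin, hcov⟩ := hAc.elim_finite_subcover_image
      (fun s hs => (hB s (hSB hs)).2) le_rfl
    have : ⋃ s ∈ S, s = ⋃ s ∈ S', s := by
      apply le_antisymm hcov
      exact Set.biUnion_subset_biUnion_left hS'S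
    rw [this]
    have h2 : ⋃ s ∈ S', s = ⋃ s ∈ hS'fin.toFinset, s := by simp
    rw [h2]
    exact hR.biUnion_mem hS'fin.toFinset fun s hs =>
      hBR (hSB (hS'S (hS'fin.mem_toFinset.mp hs)))
end

section
/- Let Y be the set of places of the algebraic closure of ℚ, with basic sets Y(K,v) = {y ∈ Y : y | v} for number fields K and places v of K. If two finite pairwise-disjoint families {V_1,...,V_m} and {W_1,...,W_n} of basic sets have equal unions, and c is a consistent map, then Σ_{i=1}^m c(V_i) = Σ_{j=1}^n c(W_j). -/
/-- Abstract axiomatization of the space `Y` of all places of `\overline{ℚ}`: a directed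
system `F` of number fields (ordered by field extension `le`), the places `Pl K` of each
number field, the map `over` sending a place `w` of `L` to the place of `K` it divides, and
the basic compact open sets `Y(K,v) = {y ∈ Y : y ∣ v}` forming a basis of the totally
disconnected Hausdorff topology on `Y`. -/
structure PlaceSystem where
  /-- the number fields -/
  F : Type
  /-- `le K L` means `L/K` is a (finite) field extension -/
  le : F → F → Prop
  le_refl : ∀ K, le K K
  /-- any two number fields admit a compositum -/
  directed : ∀ K L, ∃ M, le K M ∧ le L M
  /-- the places of a number field -/
  Pl : F → Type
  /-- `over h w` is the unique place of `K` divided by the place `w` of `L` -/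
  overPlace : ∀ {K L : F}, le K L → Pl L → Pl K
  /-- only finitely many places of `L` divide a given place of `K` -/
  finiteFibers : ∀ {K L : F} (h : le K L) (v : Pl K), {w : Pl L | overPlace h w = v}.Finite
  /-- the set of places of `\overline{ℚ}` -/
  Y : Type
  top : TopologicalSpace Y
  t2 : @T2Space Y top
  /-- the basic set `Y(K,v)` of places of `\overline{ℚ}` dividing `v` -/
  Yset : (K : F) → Pl K → Set Y
  Yset_nonempty : ∀ (K : F) (v : Pl K), (Yset K v).Nonempty
  Yset_compact : ∀ (K : F) (v : Pl K), @IsCompact Y top (Yset K v)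
  Yset_open : ∀ (K : F) (v : Pl K), @IsOpen Y top (Yset K v)
  Yset_disjoint : ∀ (K : F) (v w : Pl K), v ≠ w → Disjoint (Yset K v) (Yset K w)
  /-- `Y(K,v)` is the disjoint union of the `Y(L,w)` over the places `w ∣ v` of `L` -/
  Yset_decomp : ∀ {K L : F} (h : le K L) (v : Pl K),
    Yset K v = ⋃ w ∈ {w : Pl L | overPlace h w = v}, Yset L w
  basis : @TopologicalSpace.IsTopologicalBasis Y top
    {A : Set Y | ∃ (K : F) (v : Pl K), A = Yset K v}
  cover : (⋃ (K : F) (v : Pl K), Yset K v) = Set.univ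
  noncompact : ¬ @IsCompact Y top Set.univ

/-- A map `c` on pairs `(K,v)` is consistent if `c(K,v) = Σ_{w ∣ v} c(L,w)` for every finite
extension `L/K`. -/
def PlaceSystem.Consistent (S : PlaceSystem) (c : ∀ K : S.F, S.Pl K → ℝ) : Prop :=
  ∀ {K L : S.F} (h : S.le K L) (v : S.Pl K),
    c K v = ∑ᶠ (w : S.Pl L) (_ : S.overPlace h w = v), c L w

/-- `R`, the smallest ring of sets on `Y` containing all the basic sets `Y(K,v)`. -/
def PlaceSystem.ringR (S : PlaceSystem) : Set (Set S.Y) :=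
  ⋂₀ {R : Set (Set S.Y) |
    MeasureTheory.IsSetRing R ∧ ∀ (K : S.F) (v : S.Pl K), S.Yset K v ∈ R}

/-- A charge on `R`: a finitely additive real-valued set function vanishing on `∅`. -/
def PlaceSystem.IsCharge (S : PlaceSystem) (μ : Set S.Y → ℝ) : Prop :=
  μ ∅ = 0 ∧ ∀ A ∈ S.ringR, ∀ B ∈ S.ringR, Disjoint A B → μ (A ∪ B) = μ A + μ B
open Relation

lemma PlaceSystem.F_nonempty (S : PlaceSystem) : Nonempty S.F := by
  by_contra h
  apply S.noncompact
  have hY : IsEmpty S.Y := by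
    by_contra hY
    rw [not_isEmpty_iff] at hY
    obtain ⟨y⟩ := hY
    have hc := S.cover
    rw [Set.eq_univ_iff_forall] at hc
    obtain ⟨_, ⟨K, rfl⟩, -⟩ := hc y
    exact h ⟨K⟩
  have : (Set.univ : Set S.Y) = ∅ := Set.eq_empty_of_isEmpty _
  rw [this]
  exact @isCompact_empty _ S.top

lemma PlaceSystem.upper_bound (S : PlaceSystem) (l : List S.F) :
    ∃ M, ∀ K ∈ l, Relation.ReflTransGen S.le K M := by
  induction l with
  | nil => obtain ⟨K⟩ := S.F_nonempty; exact ⟨K, by simp⟩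
  | cons K l ih =>
    obtain ⟨M', hM'⟩ := ih
    obtain ⟨M, hKM, hM'M⟩ := S.directed K M'
    refine ⟨M, fun K' hK' => ?_⟩
    rcases List.mem_cons.mp hK' with rfl | hK'
    · exact ReflTransGen.single hKM
    · exact (hM' K' hK').trans (ReflTransGen.single hM'M)

lemma PlaceSystem.decomp (S : PlaceSystem) (c : ∀ K : S.F, S.Pl K → ℝ)
    (hc : S.Consistent c) {K M : S.F} (h : Relation.ReflTransGen S.le K M) (v : S.Pl K) :
    ∃ T : Finset (S.Pl M),
      S.Yset K v = (⋃ w ∈ T, S.Yset M w) ∧ c K v = ∑ w ∈ T, c M w := by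
  classical
  induction h with
  | refl => exact ⟨{v}, by simp, by simp⟩
  | @tail L M hKL hLM ih =>
    obtain ⟨T, hT1, hT2⟩ := ih
    set fib : S.Pl L → Finset (S.Pl M) := fun w => (S.finiteFibers hLM w).toFinset with hfib
    have hset : ∀ w, {u : S.Pl M | S.overPlace hLM u = w} = ↑(fib w) := by
      intro w; simp [hfib, Set.Finite.coe_toFinset]
    have hfibmem : ∀ (u : S.Pl M) (w : S.Pl L), u ∈ fib w ↔ S.overPlace hLM u = w := by
      intro u w; simp [hfib, Set.Finite.mem_toFinset]
    refine ⟨T.biUnion fib, ?_, ?_⟩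
    · rw [Finset.set_biUnion_biUnion, hT1]
      refine Set.iUnion₂_congr fun w _ => ?_
      rw [S.Yset_decomp hLM w, hset w]
      simp
    · rw [hT2, Finset.sum_biUnion]
      · refine Finset.sum_congr rfl fun w _ => ?_
        rw [hc hLM w]
        have : ∑ᶠ u ∈ {u : S.Pl M | S.overPlace hLM u = w}, c M u = ∑ u ∈ fib w, c M u := by
          rw [hset w]; exact finsum_mem_coe_finset _ _
        exact this
      · intro w hw w' hw' hne
        simp only [Finset.disjoint_left]
        intro u hu hu'
        rw [hfibmem] at hu hu'
        exact hne (hu ▸ hu')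

/-- If two finite pairwise-disjoint families of basic sets `Y(K,v)` have equal unions and
`c` is a consistent map, then the corresponding sums of values of `c` are equal. -/
theorem stmt_6 (S : PlaceSystem) (c : ∀ K : S.F, S.Pl K → ℝ) (hc : S.Consistent c)
    (m n : ℕ) (V : Fin m → (K : S.F) × S.Pl K) (W : Fin n → (K : S.F) × S.Pl K)
    (hVd : Pairwise (Function.onFun Disjoint fun i => S.Yset (V i).1 (V i).2))
    (hWd : Pairwise (Function.onFun Disjoint fun j => S.Yset (W j).1 (W j).2))
    (hUnion : (⋃ i, S.Yset (V i).1 (V i).2) = ⋃ j, S.Yset (W j).1 (W j).2) :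
    ∑ i, c (V i).1 (V i).2 = ∑ j, c (W j).1 (W j).2 := by
  classical
  obtain ⟨M, hM⟩ := S.upper_bound
    ((List.ofFn fun i => (V i).1) ++ (List.ofFn fun j => (W j).1))
  have hMV : ∀ i, Relation.ReflTransGen S.le (V i).1 M := fun i =>
    hM _ (by simp only [List.mem_append, List.mem_ofFn]; exact Or.inl ⟨i, rfl⟩)
  have hMW : ∀ j, Relation.ReflTransGen S.le (W j).1 M := fun j =>
    hM _ (by simp only [List.mem_append, List.mem_ofFn]; exact Or.inr ⟨j, rfl⟩)
  choose T hT1 hT2 using fun i => S.decomp c hc (hMV i) (V i).2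
  choose U hU1 hU2 using fun j => S.decomp c hc (hMW j) (W j).2
  -- characterize membership in the union of the T's / U's
  have memT : ∀ w : S.Pl M,
      (∃ i, w ∈ T i) ↔ ∃ y ∈ S.Yset M w, y ∈ ⋃ i, S.Yset (V i).1 (V i).2 := by
    intro w
    constructor
    · rintro ⟨i, hw⟩
      obtain ⟨y, hy⟩ := S.Yset_nonempty M w
      refine ⟨y, hy, Set.mem_iUnion.mpr ⟨i, ?_⟩⟩
      rw [hT1 i]
      exact Set.mem_biUnion hw hy
    · rintro ⟨y, hyw, hy⟩
      obtain ⟨i, hyi⟩ := Set.mem_iUnion.mp hy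
      rw [hT1 i] at hyi
      obtain ⟨w', hw'T, hyw'⟩ := Set.mem_iUnion₂.mp hyi
      have hww' : w = w' := by
        by_contra hne
        exact Set.disjoint_left.mp (S.Yset_disjoint M w w' hne) hyw hyw'
      exact ⟨i, hww' ▸ hw'T⟩
  have memU : ∀ w : S.Pl M,
      (∃ j, w ∈ U j) ↔ ∃ y ∈ S.Yset M w, y ∈ ⋃ j, S.Yset (W j).1 (W j).2 := by
    intro w
    constructor
    · rintro ⟨j, hw⟩
      obtain ⟨y, hy⟩ := S.Yset_nonempty M w
      refine ⟨y, hy, Set.mem_iUnion.mpr ⟨j, ?_⟩⟩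
      rw [hU1 j]
      exact Set.mem_biUnion hw hy
    · rintro ⟨y, hyw, hy⟩
      obtain ⟨j, hyj⟩ := Set.mem_iUnion.mp hy
      rw [hU1 j] at hyj
      obtain ⟨w', hw'U, hyw'⟩ := Set.mem_iUnion₂.mp hyj
      have hww' : w = w' := by
        by_contra hne
        exact Set.disjoint_left.mp (S.Yset_disjoint M w w' hne) hyw hyw'
      exact ⟨j, hww' ▸ hw'U⟩
  have hAB : Finset.univ.biUnion T = Finset.univ.biUnion U := by
    ext w
    simp only [Finset.mem_biUnion, Finset.mem_univ, true_and]
    rw [memT w, memU w, hUnion]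
  have hTd : (↑(Finset.univ : Finset (Fin m)) : Set (Fin m)).PairwiseDisjoint T := by
    intro i _ i' _ hne
    rw [Function.onFun, Finset.disjoint_left]
    intro w hw hw'
    obtain ⟨y, hy⟩ := S.Yset_nonempty M w
    have h1 : y ∈ S.Yset (V i).1 (V i).2 := by
      rw [hT1 i]; exact Set.mem_biUnion hw hy
    have h2 : y ∈ S.Yset (V i').1 (V i').2 := by
      rw [hT1 i']; exact Set.mem_biUnion hw' hy
    exact Set.disjoint_left.mp (hVd hne) h1 h2
  have hUd : (↑(Finset.univ : Finset (Fin n)) : Set (Fin n)).PairwiseDisjoint U := by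
    intro j _ j' _ hne
    rw [Function.onFun, Finset.disjoint_left]
    intro w hw hw'
    obtain ⟨y, hy⟩ := S.Yset_nonempty M w
    have h1 : y ∈ S.Yset (W j).1 (W j).2 := by
      rw [hU1 j]; exact Set.mem_biUnion hw hy
    have h2 : y ∈ S.Yset (W j').1 (W j').2 := by
      rw [hU1 j']; exact Set.mem_biUnion hw' hy
    exact Set.disjoint_left.mp (hWd hne) h1 h2
  calc ∑ i, c (V i).1 (V i).2 = ∑ i, ∑ w ∈ T i, c M w := Finset.sum_congr rfl fun i _ => hT2 i
    _ = ∑ w ∈ Finset.univ.biUnion T, c M w := (Finset.sum_biUnion hTd).symm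
    _ = ∑ w ∈ Finset.univ.biUnion U, c M w := by rw [hAB]
    _ = ∑ j, ∑ w ∈ U j, c M w := Finset.sum_biUnion hUd
    _ = ∑ j, c (W j).1 (W j).2 := Finset.sum_congr rfl fun j _ => (hU2 j).symm
end

section
/- Let Γ and Δ be countable partitions of an open set U into nonempty pairwise disjoint compact open sets, with Γ refining Δ, and let μ be a finitely additive real-valued set function on the ring of compact open sets. If Σ_{A∈Γ} μ(A) converges unconditionally to x ∈ [-∞,∞], then Σ_{B∈Δ} μ(B) also converges unconditionally to x. -/
open Filter



lemma exists_perm_blocks (key : ℕ → ℕ) (hfin : ∀ n, {i : ℕ | key i < n}.Finite) :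
    ∃ σ : Equiv.Perm ℕ,
      ∀ n : ℕ, Finset.image σ (Finset.range ((hfin n).toFinset.card)) = (hfin n).toFinset := by
  classical
  set lt : ℕ → ℕ → Prop := fun i j => key i < key j ∨ (key i = key j ∧ i < j) with hlt
  have hp : ∀ i, {j | lt j i}.Finite := by
    intro i
    apply (hfin (key i + 1)).subset
    intro j hj
    simp only [hlt, Set.mem_setOf_eq] at hj ⊢
    omega
  set r : ℕ → ℕ := fun i => ((hp i).toFinset.card) with hr
  have hsub : ∀ i j, lt i j → insert i (hp i).toFinset ⊆ (hp j).toFinset := by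
    intro i j hij
    intro k hk
    simp only [Finset.mem_insert, Set.Finite.mem_toFinset, Set.mem_setOf_eq] at hk ⊢
    rcases hk with rfl | hk
    · exact hij
    · simp only [hlt] at hij hk ⊢; omega
  have hmono : ∀ i j, lt i j → r i < r j := by
    intro i j hij
    have h1 : (hp i).toFinset.card < (insert i (hp i).toFinset).card := by
      rw [Finset.card_insert_of_notMem]
      · omega
      · simp only [Set.Finite.mem_toFinset, Set.mem_setOf_eq, hlt]; omega
    exact lt_of_lt_of_le h1 (Finset.card_le_card (hsub i j hij))
  have htri : ∀ i j : ℕ, i ≠ j → lt i j ∨ lt j i := by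
    intro i j hij; simp only [hlt]; omega
  have hinj : Function.Injective r := by
    intro i j hij
    by_contra hne
    rcases htri i j hne with h | h
    · exact absurd hij (Nat.ne_of_lt (hmono i j h))
    · exact absurd hij.symm (Nat.ne_of_lt (hmono j i h))
  have hsurj : Function.Surjective r := by
    intro n
    -- find i with n ≤ r i
    have h1 : ∃ i, n ≤ r i := by
      by_contra h
      push_neg at h
      have himg : (Finset.image r (Finset.range (n + 1))).card = n + 1 := by
        rw [Finset.card_image_of_injective _ hinj, Finset.card_range]
      have hsubs : Finset.image r (Finset.range (n + 1)) ⊆ Finset.range n := by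
        intro k hk
        simp only [Finset.mem_image] at hk
        obtain ⟨i, _, rfl⟩ := hk
        exact Finset.mem_range.mpr (h i)
      have := Finset.card_le_card hsubs
      simp [himg] at this
    obtain ⟨i, hi⟩ := h1
    -- r maps insert i (pred i) onto range (r i + 1)
    set T := insert i (hp i).toFinset with hT
    have hcardT : T.card = r i + 1 := by
      rw [hT, Finset.card_insert_of_notMem]
      · simp only [Set.Finite.mem_toFinset, Set.mem_setOf_eq, hlt]; omega
    have hmapsto : ∀ a ∈ T, r a ∈ Finset.range (r i + 1) := by
      intro a ha
      simp only [hT, Finset.mem_insert, Set.Finite.mem_toFinset, Set.mem_setOf_eq] at ha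
      rcases ha with rfl | ha
      · simp
      · exact Finset.mem_range.mpr (by have := hmono a i ha; omega)
    have hcard_le : (Finset.range (r i + 1)).card ≤ T.card := by simp [hcardT]
    have := Finset.surj_on_of_inj_on_of_card_le (s := T) (t := Finset.range (r i + 1))
      (fun a _ => r a) (fun a ha => hmapsto a ha)
      (fun a₁ a₂ _ _ h => hinj h) hcard_le
    obtain ⟨a, _, ha⟩ := this n (Finset.mem_range.mpr (by omega))
    exact ⟨a, ha.symm⟩
  set σ0 := Equiv.ofBijective r ⟨hinj, hsurj⟩ with hσ0
  refine ⟨σ0.symm, ?_⟩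
  intro n
  have hrlt : ∀ i, r i < (hfin n).toFinset.card ↔ key i < n := by
    intro i
    constructor
    · intro h
      by_contra hk
      push_neg at hk
      have hsub2 : (hfin n).toFinset ⊆ (hp i).toFinset := by
        intro j hj
        simp only [Set.Finite.mem_toFinset, Set.mem_setOf_eq, hlt] at hj ⊢
        omega
      have h2 := Finset.card_le_card hsub2
      have h3 : r i = (hp i).toFinset.card := rfl
      omega
    · intro h
      have hsub2 : insert i (hp i).toFinset ⊆ (hfin n).toFinset := by
        intro j hj
        simp only [Finset.mem_insert, Set.Finite.mem_toFinset, Set.mem_setOf_eq, hlt] at hj ⊢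
        rcases hj with rfl | hj
        · exact h
        · omega
      have := Finset.card_le_card hsub2
      rw [Finset.card_insert_of_notMem (by
        simp only [Set.Finite.mem_toFinset, Set.mem_setOf_eq, hlt]; omega)] at this
      have h3 : r i = (hp i).toFinset.card := rfl
      omega
  ext i
  simp only [Finset.mem_image, Finset.mem_range, Set.Finite.mem_toFinset, Set.mem_setOf_eq]
  constructor
  · rintro ⟨p, hp2, rfl⟩
    have : r (σ0.symm p) = p := σ0.apply_symm_apply p
    rw [← hrlt]
    omega
  · intro h
    refine ⟨r i, (hrlt i).mpr h, ?_⟩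
    have : σ0 i = r i := rfl
    rw [← this, Equiv.symm_apply_apply]


lemma mu_biUnion {Y : Type*} (μ : Set Y → ℝ) (h0 : μ ∅ = 0) [TopologicalSpace Y]
    (hadd : ∀ A B : Set Y, IsCompact A → IsOpen A → IsCompact B → IsOpen B →
      Disjoint A B → μ (A ∪ B) = μ A + μ B)
    (C : ℕ → Set Y) (hc : ∀ i, IsCompact (C i)) (ho : ∀ i, IsOpen (C i))
    (hd : Pairwise (Function.onFun Disjoint C)) (s : Finset ℕ) :
    μ (⋃ i ∈ s, C i) = ∑ i ∈ s, μ (C i) := by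
  classical
  induction s using Finset.induction with
  | empty => simpa using h0
  | @insert a s ha ih =>
    rw [Finset.set_biUnion_insert, Finset.sum_insert ha, ← ih,
      hadd _ _ (hc a) (ho a) (s.isCompact_biUnion (fun i _ => hc i))
        (isOpen_biUnion (fun i _ => ho i))]
    rw [Set.disjoint_iUnion₂_right]
    intro i hi
    exact hd (fun h => ha (h ▸ hi))


/-- Unconditional convergence of a countable sum of reals to a value in `[-∞,∞]`:
every enumeration of the terms has partial sums tending to `L` in `EReal`. -/
def UncondSumRE (x : ℕ → ℝ) (L : EReal) : Prop :=
  ∀ σ : Equiv.Perm ℕ,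
    Filter.Tendsto (fun n : ℕ => ((∑ k ∈ Finset.range n, x (σ k) : ℝ) : EReal))
      Filter.atTop (nhds L)

/-- If `Γ` and `Δ` are countable partitions of an open set `U` into pairwise disjoint
compact open sets (padded with `∅`), `Γ` refines `Δ`, and `μ` is a finitely additive
real-valued set function on compact open sets with `μ ∅ = 0`, then unconditional
convergence of `Σ_{A∈Γ} μ(A)` to `x ∈ [-∞,∞]` implies the same for `Σ_{B∈Δ} μ(B)`. -/
theorem stmt_11 (Y : Type*) [TopologicalSpace Y] [T2Space Y]
    (μ : Set Y → ℝ) (h0 : μ ∅ = 0)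
    (hadd : ∀ A B : Set Y, IsCompact A → IsOpen A → IsCompact B → IsOpen B →
      Disjoint A B → μ (A ∪ B) = μ A + μ B)
    (U : Set Y) (hU : IsOpen U)
    (Γ Δ : ℕ → Set Y)
    (hΓco : ∀ i, IsCompact (Γ i) ∧ IsOpen (Γ i))
    (hΔco : ∀ j, IsCompact (Δ j) ∧ IsOpen (Δ j))
    (hΓd : Pairwise (Function.onFun Disjoint Γ))
    (hΔd : Pairwise (Function.onFun Disjoint Δ))
    (hΓU : (⋃ i, Γ i) = U) (hΔU : (⋃ j, Δ j) = U)
    (href : ∀ j, Δ j = ⋃ i ∈ {i : ℕ | Γ i ⊆ Δ j}, Γ i)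
    (x : EReal) (hx : UncondSumRE (fun i => μ (Γ i)) x) :
    UncondSumRE (fun j => μ (Δ j)) x := by
  classical
  -- every nonempty Γ i is contained in some Δ j
  have hexu : ∀ i, (Γ i).Nonempty → ∃ j, Γ i ⊆ Δ j := by
    rintro i ⟨y, hy⟩
    have hyU : y ∈ U := by rw [← hΓU]; exact Set.mem_iUnion.mpr ⟨i, hy⟩
    rw [← hΔU] at hyU
    obtain ⟨j, hj⟩ := Set.mem_iUnion.mp hyU
    rw [href j] at hj
    obtain ⟨i', hi', hyi'⟩ := Set.mem_iUnion₂.mp hj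
    have : i = i' := by
      by_contra hne
      exact Set.disjoint_left.mp (hΓd hne) hy hyi'
    exact ⟨j, this ▸ hi'⟩
  set f : ∀ i, (Γ i).Nonempty → ℕ := fun i h => Classical.choose (hexu i h) with hfdef
  have hf : ∀ i (h : (Γ i).Nonempty), Γ i ⊆ Δ (f i h) := fun i h =>
    Classical.choose_spec (hexu i h)
  have funiq : ∀ i (h : (Γ i).Nonempty) j, Γ i ⊆ Δ j → f i h = j := by
    intro i h j hij
    by_contra hne
    have hfy := hf i h
    obtain ⟨y, hy⟩ := h
    exact Set.disjoint_left.mp (hΔd hne) (hfy hy) (hij hy)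
  -- each Δ j is a finite union of Γ i's
  set S : ℕ → Set ℕ := fun j => {i | Γ i ⊆ Δ j ∧ (Γ i).Nonempty} with hSdef
  have hSfin : ∀ j, (S j).Finite := by
    intro j
    have hcov : Δ j ⊆ ⋃ i ∈ {i : ℕ | Γ i ⊆ Δ j}, Γ i := (href j).le
    obtain ⟨b', hb'sub, hb'fin, hb'cov⟩ :=
      (hΔco j).1.elim_finite_subcover_image (fun i _ => (hΓco i).2) hcov
    apply hb'fin.subset
    rintro i ⟨hi, y, hy⟩
    obtain ⟨i', hi', hyi'⟩ := Set.mem_iUnion₂.mp (hb'cov (hi hy))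
    have : i = i' := by
      by_contra hne
      exact Set.disjoint_left.mp (hΓd hne) hy hyi'
    exact this ▸ hi'
  set F : ℕ → Finset ℕ := fun j => (hSfin j).toFinset with hFdef
  have hFmem : ∀ j i, i ∈ F j ↔ (Γ i ⊆ Δ j ∧ (Γ i).Nonempty) := by
    intro j i; simp [hFdef, hSdef]
  have hΔeq : ∀ j, Δ j = ⋃ i ∈ F j, Γ i := by
    intro j
    apply Set.Subset.antisymm
    · intro y hy
      have := (href j).le hy
      obtain ⟨i, hi, hyi⟩ := Set.mem_iUnion₂.mp this
      exact Set.mem_iUnion₂.mpr ⟨i, (hFmem j i).mpr ⟨hi, ⟨y, hyi⟩⟩, hyi⟩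
    · exact Set.iUnion₂_subset (fun i hi => ((hFmem j i).mp hi).1)
  have hb : ∀ j, μ (Δ j) = ∑ i ∈ F j, μ (Γ i) := by
    intro j
    rw [hΔeq j]
    exact mu_biUnion μ h0 hadd Γ (fun i => (hΓco i).1) (fun i => (hΓco i).2) hΓd (F j)
  -- now handle an arbitrary permutation of the Δ-indices
  intro τ
  set key : ℕ → ℕ := fun i => if h : (Γ i).Nonempty then τ.symm (f i h) else i with hkey
  have hkeyval : ∀ i (h : (Γ i).Nonempty), key i = τ.symm (f i h) := by
    intro i h
    simp only [hkey]
    rw [dif_pos h]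
  have hfin : ∀ n, {i : ℕ | key i < n}.Finite := by
    intro n
    apply (((Set.finite_Iio n).biUnion (fun k _ => hSfin (τ k))).union (Set.finite_Iio n)).subset
    intro i hi
    simp only [Set.mem_setOf_eq, hkey] at hi
    by_cases h : (Γ i).Nonempty
    · rw [dif_pos h] at hi
      left
      refine Set.mem_iUnion₂.mpr ⟨τ.symm (f i h), hi, ?_⟩
      simp only [hSdef, Set.mem_setOf_eq, Equiv.apply_symm_apply]
      exact ⟨hf i h, h⟩
    · rw [dif_neg h] at hi
      exact Or.inr hi
  obtain ⟨σ, hσ⟩ := exists_perm_blocks key hfin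
  set m : ℕ → ℕ := fun n => (hfin n).toFinset.card with hm
  have hBmem : ∀ n i, i ∈ (hfin n).toFinset ↔ key i < n := by
    intro n i; simp
  have hm_top : Tendsto m atTop atTop := by
    rw [tendsto_atTop_atTop]
    intro N
    refine ⟨(Finset.range N).sup key + 1, fun n hn => ?_⟩
    have hsub : Finset.range N ⊆ (hfin n).toFinset := by
      intro i hi
      rw [hBmem]
      have := Finset.le_sup (f := key) hi
      omega
    calc N = (Finset.range N).card := (Finset.card_range N).symm
    _ ≤ (hfin n).toFinset.card := Finset.card_le_card hsub
  have hσinj : Function.Injective σ := σ.injective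
  have hsum : ∀ n, ∑ k ∈ Finset.range (m n), μ (Γ (σ k)) = ∑ k ∈ Finset.range n, μ (Δ (τ k)) := by
    intro n
    have e1 : ∑ k ∈ Finset.range (m n), μ (Γ (σ k))
        = ∑ i ∈ Finset.image σ (Finset.range (m n)), μ (Γ i) := by
      rw [Finset.sum_image (fun a _ b _ h => hσinj h)]
    rw [e1, hσ n]
    have e2 : ∑ i ∈ (hfin n).toFinset, μ (Γ i)
        = ∑ i ∈ (hfin n).toFinset.filter (fun i => (Γ i).Nonempty), μ (Γ i) := by
      rw [Finset.sum_filter_of_ne]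
      intro i _ hne
      by_contra h
      rw [Set.not_nonempty_iff_eq_empty] at h
      exact hne (by rw [h, h0])
    rw [e2]
    have e3 : (hfin n).toFinset.filter (fun i => (Γ i).Nonempty)
        = (Finset.range n).biUnion (fun k => F (τ k)) := by
      ext i
      simp only [Finset.mem_filter, Finset.mem_biUnion, Finset.mem_range, hBmem, hFmem]
      constructor
      · rintro ⟨hk, h⟩
        have hk' : key i < n := hk
        rw [hkeyval i h] at hk'
        exact ⟨τ.symm (f i h), hk', by simpa using hf i h, h⟩
      · rintro ⟨k, hk, hsub, h⟩
        refine ⟨?_, h⟩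
        show key i < n
        rw [hkeyval i h, funiq i h (τ k) hsub]
        simpa using hk
    rw [e3, Finset.sum_biUnion]
    · exact Finset.sum_congr rfl (fun k _ => (hb (τ k)).symm)
    · intro k _ k' _ hkk'
      simp only [Function.onFun]
      rw [Finset.disjoint_left]
      intro i hi hi'
      rw [hFmem] at hi hi'
      obtain ⟨y, hy⟩ := hi.2
      have : τ k ≠ τ k' := fun h => hkk' (τ.injective h)
      exact Set.disjoint_left.mp (hΔd this) (hi.1 hy) (hi'.1 hy)
  have hcomp := (hx σ).comp hm_top
  refine hcomp.congr (fun n => ?_)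
  simp only [Function.comp]
  rw [hsum n]
end
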